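/- arXiv:1910.02885 — 2 statements merged into one kernel-verified Lean document; each statement's English description precedes it below -/
import Mathlib

section
/- Let $x \geq 2$ and $2 \leq \lambda < 3$. For a positive integer $n \leq x^{\lambda}$, define $w(n) = 1 - \frac{1}{3-\lambda}\sum_{p \mid n,\ p < x} w_p(n)$, where for a prime $p$ dividing $n$: $w_p(n) = 1 - \frac{\log p}{\log x}$ if $p$ is the least prime factor of $n$, $w_p(n) = \frac{\log p_n}{\log x}$ (with $p_n$ the least prime factor of $n$) if $p > p_n$ and $p < x^{1/2}$, and $w_p(n) = 1 - \frac{\log p}{\log x}$ if $p > p_n$ and $p \geq x^{1/2}$. If $n$ is squarefree, $n \leq x^\lambda$, and $w(n) > 0$, then $n$ has at most 2 distinct prime factors. -/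
/-- **Richert weight detects almost-primes.** If `n ≤ x^λ` is squarefree and the
Richert weight `w(n)` is positive, then `n` has at most two distinct prime factors. -/
theorem stmt_0 (x lam : ℝ) (hx : 2 ≤ x) (hlam1 : 2 ≤ lam) (hlam2 : lam < 3)
    (n : ℕ) (hsf : Squarefree n) (hn : (n : ℝ) ≤ x ^ lam)
    (w : ℝ)
    (hw : w = 1 - (1 / (3 - lam)) *
      ∑ p ∈ n.primeFactors.filter (fun p : ℕ => (p : ℝ) < x),
        (if p = n.minFac then 1 - Real.log p / Real.log x
         else if (p : ℝ) < x ^ ((1 : ℝ) / 2) then Real.log n.minFac / Real.log x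
         else 1 - Real.log p / Real.log x))
    (hpos : 0 < w) :
    n.primeFactors.card ≤ 2 := by
  by_contra hcard
  push_neg at hcard
  have hn0 : n ≠ 0 := hsf.ne_zero
  have hn1 : n ≠ 1 := by rintro rfl; simp at hcard
  have hx0 : (0:ℝ) < x := by linarith
  have hx1 : (1:ℝ) < x := by linarith
  have hlx : 0 < Real.log x := Real.log_pos hx1
  have h3 : (0:ℝ) < 3 - lam := by linarith
  set p0 := n.minFac with hp0def
  have hp0prime : p0.Prime := Nat.minFac_prime hn1
  have hp0P : p0 ∈ n.primeFactors :=
    Nat.mem_primeFactors.mpr ⟨hp0prime, Nat.minFac_dvd n, hn0⟩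
  have hp01 : (1:ℝ) ≤ (p0:ℝ) := by exact_mod_cast hp0prime.one_lt.le
  have hlp0 : 0 ≤ Real.log p0 := Real.log_nonneg hp01
  -- pick q, r distinct prime factors different from p0
  have hcard2 : 1 < (n.primeFactors.erase p0).card := by
    rw [Finset.card_erase_of_mem hp0P]; omega
  obtain ⟨q, hq, r, hr, hqr⟩ := Finset.one_lt_card.mp hcard2
  rw [Finset.mem_erase] at hq hr
  obtain ⟨hqp0, hqP⟩ := hq
  obtain ⟨hrp0, hrP⟩ := hr
  obtain ⟨hqprime, hqdvd, -⟩ := Nat.mem_primeFactors.mp hqP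
  obtain ⟨hrprime, hrdvd, -⟩ := Nat.mem_primeFactors.mp hrP
  have hq1 : (1:ℝ) ≤ (q:ℝ) := by exact_mod_cast hqprime.one_lt.le
  have hr1 : (1:ℝ) ≤ (r:ℝ) := by exact_mod_cast hrprime.one_lt.le
  have hsub : ({p0, q, r} : Finset ℕ) ⊆ n.primeFactors := by
    intro p hp
    simp only [Finset.mem_insert, Finset.mem_singleton] at hp
    rcases hp with rfl | rfl | rfl
    · exact hp0P
    · exact hqP
    · exact hrP
  have hp0nm : p0 ∉ ({q, r} : Finset ℕ) := by
    simp only [Finset.mem_insert, Finset.mem_singleton]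
    push_neg
    exact ⟨Ne.symm hqp0, Ne.symm hrp0⟩
  have hqnm : q ∉ ({r} : Finset ℕ) := by simpa using hqr
  -- p0 < x
  have hp0x : (p0:ℝ) < x := by
    have hprodn : ∏ p ∈ n.primeFactors, p = n := Nat.prod_primeFactors_of_squarefree hsf
    have hle : p0 * (q * r) ≤ n := by
      calc p0 * (q * r) = ∏ p ∈ ({p0, q, r} : Finset ℕ), p := by
            rw [Finset.prod_insert hp0nm, Finset.prod_insert hqnm, Finset.prod_singleton]
        _ ≤ ∏ p ∈ n.primeFactors, p := by
            refine Finset.prod_le_prod_of_subset_of_one_le' hsub ?_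
            intro i hi _
            exact (Nat.prime_of_mem_primeFactors hi).one_lt.le
        _ = n := hprodn
    have hp0q : p0 ≤ q := Nat.minFac_le_of_dvd hqprime.two_le hqdvd
    have hp0r : p0 ≤ r := Nat.minFac_le_of_dvd hrprime.two_le hrdvd
    have hcube : p0 ^ 3 ≤ n := by
      calc p0 ^ 3 = p0 * (p0 * p0) := by ring
        _ ≤ p0 * (q * r) := Nat.mul_le_mul_left _ (Nat.mul_le_mul hp0q hp0r)
        _ ≤ n := hle
    have hcubeR : (p0:ℝ) ^ 3 ≤ (n:ℝ) := by exact_mod_cast hcube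
    have hxlam : x ^ lam < x ^ (3:ℝ) := Real.rpow_lt_rpow_of_exponent_lt hx1 hlam2
    have hx3 : x ^ (3:ℝ) = x ^ (3:ℕ) := by
      rw [← Real.rpow_natCast]; norm_num
    have : (p0:ℝ) ^ 3 < x ^ 3 := by
      rw [← hx3]; exact lt_of_le_of_lt (hcubeR.trans hn) hxlam
    exact lt_of_pow_lt_pow_left₀ 3 hx0.le this
  -- sum of logs bound
  have hlogsum : Real.log p0 + Real.log q + Real.log r ≤ lam * Real.log x := by
    have h1 : Real.log n = ∑ p ∈ n.primeFactors, Real.log p := by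
      conv_lhs => rw [← Nat.prod_primeFactors_of_squarefree hsf]
      push_cast
      refine Real.log_prod (fun p hp => ?_)
      have := (Nat.prime_of_mem_primeFactors hp).pos
      positivity
    have h2 : ∑ p ∈ ({p0, q, r} : Finset ℕ), Real.log p
        ≤ ∑ p ∈ n.primeFactors, Real.log p := by
      refine Finset.sum_le_sum_of_subset_of_nonneg hsub (fun p hp _ => ?_)
      exact Real.log_nonneg (by exact_mod_cast (Nat.prime_of_mem_primeFactors hp).one_lt.le)
    rw [Finset.sum_insert hp0nm, Finset.sum_insert hqnm, Finset.sum_singleton] at h2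
    have h4 : Real.log n ≤ lam * Real.log x := by
      calc Real.log n ≤ Real.log (x ^ lam) :=
            Real.log_le_log (by exact_mod_cast hsf.ne_zero.bot_lt) hn
        _ = lam * Real.log x := Real.log_rpow hx0 lam
    linarith
  -- abbreviations
  set E : ℕ → ℝ := fun p => if (p:ℝ) < x then
      (if p = p0 then 1 - Real.log p / Real.log x
       else if (p:ℝ) < x ^ ((1:ℝ)/2) then Real.log p0 / Real.log x
       else 1 - Real.log p / Real.log x) else 0 with hEdef
  -- the sum is < 3 - lam
  have hSlt : ∑ p ∈ n.primeFactors, E p < 3 - lam := by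
    rw [hEdef, ← Finset.sum_filter]
    have h1 : (1 / (3 - lam)) *
        (∑ p ∈ n.primeFactors.filter (fun p : ℕ => (p : ℝ) < x),
          (if p = p0 then 1 - Real.log p / Real.log x
           else if (p : ℝ) < x ^ ((1 : ℝ) / 2) then Real.log p0 / Real.log x
           else 1 - Real.log p / Real.log x)) < 1 := by
      rw [hw] at hpos; linarith
    rw [one_div_mul_eq_div, div_lt_one h3] at h1
    exact h1
  -- nonnegativity of E on prime factors
  have hEnn : ∀ p ∈ n.primeFactors, 0 ≤ E p := by
    intro p hp
    have hp1 : (1:ℝ) ≤ (p:ℝ) := by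
      exact_mod_cast (Nat.prime_of_mem_primeFactors hp).one_lt.le
    rw [hEdef]
    simp only
    split_ifs with h1 h2 h3'
    · have hlog : Real.log p ≤ Real.log x := Real.log_le_log (by linarith) h1.le
      have : Real.log p / Real.log x ≤ 1 := by rw [div_le_one hlx]; exact hlog
      linarith
    · positivity
    · have hlog : Real.log p ≤ Real.log x := Real.log_le_log (by linarith) h1.le
      have : Real.log p / Real.log x ≤ 1 := by rw [div_le_one hlx]; exact hlog
      linarith
    · exact le_refl 0
  -- lower bound via three terms
  have hge : E p0 + (E q + E r) ≤ ∑ p ∈ n.primeFactors, E p := by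
    have h1 : ∑ p ∈ ({p0, q, r} : Finset ℕ), E p ≤ ∑ p ∈ n.primeFactors, E p :=
      Finset.sum_le_sum_of_subset_of_nonneg hsub (fun p hp _ => hEnn p hp)
    rwa [Finset.sum_insert hp0nm, Finset.sum_insert hqnm, Finset.sum_singleton] at h1
  have hEp0 : E p0 = 1 - Real.log p0 / Real.log x := by
    rw [hEdef]; simp [hp0x]
  have hhalf : x ^ ((1:ℝ)/2) ≤ x := by
    calc x ^ ((1:ℝ)/2) ≤ x ^ (1:ℝ) :=
          Real.rpow_le_rpow_of_exponent_le hx1.le (by norm_num)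
      _ = x := Real.rpow_one x
  -- small-prime value
  have hB : ∀ p : ℕ, p ≠ p0 → (p:ℝ) < x ^ ((1:ℝ)/2) → E p = Real.log p0 / Real.log x := by
    intro p hne hs
    have hpx : (p:ℝ) < x := lt_of_lt_of_le hs hhalf
    rw [hEdef]; simp only; rw [if_pos hpx, if_neg hne, if_pos hs]
  -- non-small prime bound
  have hC : ∀ p : ℕ, (1:ℝ) ≤ (p:ℝ) → p ≠ p0 → ¬ (p:ℝ) < x ^ ((1:ℝ)/2) →
      1 - Real.log p / Real.log x ≤ E p := by
    intro p hp1 hne hns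
    rw [hEdef]; simp only
    by_cases h1 : (p:ℝ) < x
    · rw [if_pos h1, if_neg hne, if_neg hns]
    · rw [if_neg h1]
      push_neg at h1
      have hlog : Real.log x ≤ Real.log p := Real.log_le_log hx0 h1
      have : 1 ≤ Real.log p / Real.log x := by rw [le_div_iff₀ hlx]; linarith
      linarith
  have hdivsum : Real.log p0 / Real.log x + Real.log q / Real.log x
      + Real.log r / Real.log x ≤ lam := by
    rw [← add_div, ← add_div, div_le_iff₀ hlx]
    linarith
  by_cases hqs : (q:ℝ) < x ^ ((1:ℝ)/2)
  · have hEq : E q = Real.log p0 / Real.log x := hB q hqp0 hqs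
    have hEr : 0 ≤ E r := hEnn r hrP
    rw [hEq, hEp0] at hge
    linarith
  · by_cases hrs : (r:ℝ) < x ^ ((1:ℝ)/2)
    · have hEr : E r = Real.log p0 / Real.log x := hB r hrp0 hrs
      have hEq : 0 ≤ E q := hEnn q hqP
      rw [hEr, hEp0] at hge
      linarith
    · have hEq : 1 - Real.log q / Real.log x ≤ E q := hC q hq1 hqp0 hqs
      have hEr : 1 - Real.log r / Real.log x ≤ E r := hC r hr1 hrp0 hrs
      rw [hEp0] at hge
      linarith
end

section
/- For real $x \geq 2$ and $M$ with $1 \leq M \leq x/2$, $\sum_{1 \leq l < x/M} \log\left(\min\left(2, \frac{x}{lM}\right)\right) = \frac{x}{2M} + O(\log x)$. -/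
open MeasureTheory intervalIntegral

/-- `∑_{1 ≤ l < x/M} log(min(2, x/(lM))) = x/(2M) + O(log x)` for `2 ≤ x`,
`1 ≤ M ≤ x/2`. -/
theorem stmt_14 : ∃ K : ℝ, ∀ x M : ℝ, 2 ≤ x → 1 ≤ M → M ≤ x / 2 →
    |(∑ l ∈ Finset.Ico 1 ⌈x / M⌉₊, Real.log (min 2 (x / (l * M)))) - x / (2 * M)|
      ≤ K * Real.log x := by
  use 3
  intro x M hx hM hMx
  have hM0 : (0:ℝ) < M := by linarith
  set y : ℝ := x / M with hy
  have hy2 : 2 ≤ y := by rw [hy, le_div_iff₀ hM0]; linarith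
  have hy0 : (0:ℝ) < y := by linarith
  have hxy : x / (2 * M) = y / 2 := by rw [hy]; ring
  set g : ℝ → ℝ := fun t => min (Real.log 2) (Real.log y - Real.log t) with hg
  have hlog2pos : 0 < Real.log 2 := Real.log_pos one_lt_two
  have hlogy : Real.log 2 ≤ Real.log y := Real.log_le_log two_pos hy2
  -- g is antitone on [0, ∞)
  have hganti : AntitoneOn g (Set.Ici 0) := by
    intro s hs t ht hst
    rcases eq_or_lt_of_le (Set.mem_Ici.mp hs : (0:ℝ) ≤ s) with h0 | h0
    · have hgs : g s = Real.log 2 := by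
        simp only [hg, ← h0, Real.log_zero, sub_zero, min_eq_left hlogy]
      rw [hgs]; exact min_le_left _ _
    · refine min_le_min le_rfl ?_
      have := Real.log_le_log h0 hst
      linarith
  -- integrability on nonneg intervals
  have hint : ∀ a b : ℝ, 0 ≤ a → 0 ≤ b → IntervalIntegrable g volume a b := by
    intro a b ha hb
    exact (hganti.mono
      (fun t ht => Set.mem_Ici.mpr (le_trans (le_min ha hb) ht.1))).intervalIntegrable
  -- on [0, y/2], g = log 2
  have hgconst : ∀ t : ℝ, 0 ≤ t → t ≤ y / 2 → g t = Real.log 2 := by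
    intro t ht0 ht2
    apply min_eq_left
    rcases eq_or_lt_of_le ht0 with h0 | h0
    · rw [← h0, Real.log_zero]; linarith
    · have h := Real.log_le_log h0 ht2
      rw [Real.log_div (by linarith) two_ne_zero] at h
      linarith
  -- ∫₀^{y/2} g = (y/2) log 2
  have h1 : ∫ t in (0:ℝ)..(y/2), g t = (y/2) * Real.log 2 := by
    rw [intervalIntegral.integral_congr (g := fun _ => Real.log 2)
      (fun t ht => by
        rw [Set.uIcc_of_le (by positivity)] at ht
        exact hgconst t ht.1 ht.2)]
    simp
  -- ∫_{y/2}^y g = y/2 - (y/2) log 2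
  have h2 : ∫ t in (y/2)..y, g t = y/2 - (y/2) * Real.log 2 := by
    have hc : ∫ t in (y/2)..y, g t = ∫ t in (y/2)..y, (Real.log y - Real.log t) := by
      apply intervalIntegral.integral_congr
      intro t ht
      rw [Set.uIcc_of_le (by linarith)] at ht
      apply min_eq_right
      have h := Real.log_le_log (by positivity : (0:ℝ) < y/2) ht.1
      rw [Real.log_div (by linarith) two_ne_zero] at h
      linarith
    have hlogint : IntervalIntegrable Real.log volume (y/2) y := by
      apply ContinuousOn.intervalIntegrable
      apply Real.continuousOn_log.mono
      intro t ht
      rw [Set.uIcc_of_le (by linarith)] at ht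
      simp only [Set.mem_compl_iff, Set.mem_singleton_iff]
      intro h; rw [h] at ht; linarith [ht.1]
    rw [hc, intervalIntegral.integral_sub intervalIntegrable_const hlogint,
      intervalIntegral.integral_const, integral_log,
      Real.log_div (by linarith : y ≠ 0) two_ne_zero]
    simp only [smul_eq_mul]; ring
  -- total integral
  have hI : ∫ t in (0:ℝ)..y, g t = y / 2 := by
    rw [← intervalIntegral.integral_add_adjacent_intervals
      (hint 0 (y/2) le_rfl (by positivity)) (hint (y/2) y (by positivity) hy0.le), h1, h2]
    ring
  -- ∫₀¹ g = log 2
  have h01 : ∫ t in (0:ℝ)..1, g t = Real.log 2 := by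
    rw [intervalIntegral.integral_congr (g := fun _ => Real.log 2)
      (fun t ht => by
        rw [Set.uIcc_of_le zero_le_one] at ht
        exact hgconst t ht.1 (by linarith [ht.2]))]
    simp
  set N : ℕ := ⌈y⌉₊ with hN
  have hN1 : 1 ≤ N := by
    rw [hN]
    exact_mod_cast Nat.one_le_ceil_iff.mpr hy0
  have hNy : y ≤ (N:ℝ) := Nat.le_ceil y
  have hNy1 : (N:ℝ) < y + 1 := Nat.ceil_lt_add_one hy0.le
  set n : ℕ := N - 1 with hn
  have hncast : (n:ℝ) = (N:ℝ) - 1 := by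
    rw [hn, Nat.cast_sub hN1]; norm_num
  have hny : (n:ℝ) ≤ y := by linarith
  have hNn : (1:ℝ) + (n:ℝ) = (N:ℝ) := by rw [hncast]; ring
  -- rewrite the sum in terms of g
  have hsum : ∑ l ∈ Finset.Ico 1 N, Real.log (min 2 (x / (l * M)))
      = ∑ i ∈ Finset.range n, g ((1:ℝ) + i) := by
    rw [Finset.sum_Ico_eq_sum_range]
    apply Finset.sum_congr rfl
    intro i _
    have hc0 : (0:ℝ) < 1 + (i:ℝ) := by positivity
    have hcast : ((1 + i : ℕ) : ℝ) = 1 + (i:ℝ) := by push_cast; ring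
    have hxl : x / (((1 + i : ℕ):ℝ) * M) = y / (1 + (i:ℝ)) := by
      rw [hcast, hy, div_div, mul_comm]
    have hld : Real.log (y / (1+(i:ℝ))) = Real.log y - Real.log (1+(i:ℝ)) :=
      Real.log_div hy0.ne' hc0.ne'
    rw [hxl]
    rcases le_total (y / (1+(i:ℝ))) 2 with h | h
    · rw [min_eq_right h]
      have h2' : Real.log (y / (1+(i:ℝ))) ≤ Real.log 2 :=
        Real.log_le_log (by positivity) h
      rw [hld] at h2' ⊢
      exact (min_eq_right h2').symm
    · rw [min_eq_left h]
      have h2' : Real.log 2 ≤ Real.log (y / (1+(i:ℝ))) :=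
        Real.log_le_log two_pos h
      rw [hld] at h2'
      exact (min_eq_left h2').symm
  -- upper bound
  have hup : ∑ i ∈ Finset.range n, g ((1:ℝ) + i) ≤ ∫ t in (0:ℝ)..(n:ℝ), g t := by
    have h := AntitoneOn.sum_le_integral (x₀ := 0) (a := n) (f := g)
      (hganti.mono (fun t ht => Set.mem_Ici.mpr (by simpa using ht.1)))
    rw [zero_add] at h
    refine le_trans (le_of_eq (Finset.sum_congr rfl fun i _ => ?_)) h
    norm_num
    congr 1
    push_cast; ring
  have hup2 : ∫ t in (0:ℝ)..(n:ℝ), g t ≤ y/2 := by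
    have hsplit := intervalIntegral.integral_add_adjacent_intervals
      (hint 0 n le_rfl (Nat.cast_nonneg n)) (hint n y (Nat.cast_nonneg n) hy0.le)
    have hpos : 0 ≤ ∫ t in (n:ℝ)..y, g t := by
      apply intervalIntegral.integral_nonneg hny
      intro u hu
      refine le_min hlog2pos.le ?_
      rcases eq_or_lt_of_le (le_trans (Nat.cast_nonneg n) hu.1) with h0 | h0
      · rw [← h0, Real.log_zero]; linarith [Real.log_nonneg (by linarith : (1:ℝ) ≤ y)]
      · have := Real.log_le_log h0 hu.2
        linarith
    linarith [hI, hsplit]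
  -- lower bound
  have hlow1 : ∫ t in (1:ℝ)..(1+(n:ℝ)), g t ≤ ∑ i ∈ Finset.range n, g ((1:ℝ) + i) := by
    have h := AntitoneOn.integral_le_sum (x₀ := 1) (a := n) (f := g)
      (hganti.mono (fun t ht => Set.mem_Ici.mpr (by linarith [ht.1])))
    exact h
  have hs1 := intervalIntegral.integral_add_adjacent_intervals
    (hint 0 1 le_rfl zero_le_one) (hint 1 y zero_le_one hy0.le)
  have hs2 := intervalIntegral.integral_add_adjacent_intervals
    (hint 1 y zero_le_one hy0.le) (hint y N hy0.le (Nat.cast_nonneg N))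
  have htail : -(Real.log 2) ≤ ∫ t in y..(N:ℝ), g t := by
    have hgt : ∀ u ∈ Set.Icc y (N:ℝ), -(Real.log 2) ≤ g u := by
      intro u hu
      refine le_min (by linarith) ?_
      have h1 : Real.log u ≤ Real.log (2*y) :=
        Real.log_le_log (by linarith [hu.1]) (by linarith [hu.2])
      rw [Real.log_mul two_ne_zero hy0.ne'] at h1
      linarith
    have hmono := intervalIntegral.integral_mono_on hNy
      intervalIntegrable_const (hint y N hy0.le (Nat.cast_nonneg N)) hgt
    rw [intervalIntegral.integral_const, smul_eq_mul] at hmono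
    nlinarith [hNy, hNy1, hlog2pos]
  have hlow2 : y/2 - 2 * Real.log 2 ≤ ∑ i ∈ Finset.range n, g ((1:ℝ) + i) := by
    rw [hNn] at hlow1
    linarith [hI, hs1, hs2, h01]
  have hlx : Real.log 2 ≤ Real.log x := Real.log_le_log two_pos hx
  rw [hxy, hsum, abs_le]
  constructor <;> linarith
end
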